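/- Let $b_n \le b_{n+1} < 0$ with $b_n \to 0$, $x \in (0,2)$, and suppose $x - b_n < 2$ for all $n > N$. Define $\kappa_n \in [0, \pi/2)$ for $n > N$ by $x - b_n = 2\cos\kappa_n$, and $\kappa_\infty = \arccos(x/2)$. Let $p_n$ satisfy $p_{n+1} = (x - b_{n+1})p_n - p_{n-1}$ and set $\Phi_n = p_n - e^{-i\kappa_n} p_{n-1}$. Then for $n > N$: $|\Phi_{n+1}| \le (1 + \frac{\kappa_{n+1}-\kappa_n}{\sin\kappa_n})|\Phi_n|$ and $|\Phi_{n+1}| \ge (1 - \frac{\kappa_{n+1}-\kappa_n}{\sin\kappa_n})|\Phi_n|$. -/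

import Mathlib

lemma aux_abs_exp_I_sub_one (t : ℝ) :
    ‖Complex.exp ((t : ℂ) * Complex.I) - 1‖ ≤ |t| := by
  have h : Complex.exp ((t : ℂ) * Complex.I) - 1 =
      Complex.ofReal (Real.cos t - 1) + Complex.ofReal (Real.sin t) * Complex.I := by
    rw [Complex.exp_mul_I, ← Complex.ofReal_cos, ← Complex.ofReal_sin]
    push_cast
    ring
  rw [h]
  have habs : ‖Complex.ofReal (Real.cos t - 1) + Complex.ofReal (Real.sin t) * Complex.I‖
      = Real.sqrt ((Real.cos t - 1)^2 + (Real.sin t)^2) := by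
    rw [Complex.norm_def, Complex.normSq_add_mul_I]
  rw [habs]
  rw [show |t| = Real.sqrt (t^2) by rw [Real.sqrt_sq_eq_abs]]
  apply Real.sqrt_le_sqrt
  have hpyth := Real.sin_sq_add_cos_sq t
  have hcos := Real.one_sub_sq_div_two_le_cos (x := t)
  nlinarith [Real.cos_le_one t]

lemma aux_abs_exp_sub_exp (a c : ℝ) (h : a ≤ c) :
    ‖Complex.exp (-(a:ℂ) * Complex.I) - Complex.exp (-(c:ℂ) * Complex.I)‖ ≤ c - a := by
  have key : Complex.exp (-(a:ℂ) * Complex.I) - Complex.exp (-(c:ℂ) * Complex.I)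
      = Complex.exp (-(c:ℂ) * Complex.I) * (Complex.exp (((c - a : ℝ) : ℂ) * Complex.I) - 1) := by
    rw [mul_sub, mul_one, ← Complex.exp_add]
    push_cast
    ring_nf
  rw [key, norm_mul]
  have h1 : ‖Complex.exp (-(c:ℂ) * Complex.I)‖ = 1 := by
    rw [show -(c:ℂ) * Complex.I = ((-c : ℝ) : ℂ) * Complex.I by push_cast; ring]
    exact Complex.norm_exp_ofReal_mul_I (-c)
  rw [h1, one_mul]
  calc ‖Complex.exp (((c - a : ℝ) : ℂ) * Complex.I) - 1‖ ≤ |c - a| :=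
        aux_abs_exp_I_sub_one (c - a)
    _ = c - a := _root_.abs_of_nonneg (by linarith)

theorem stmt_8 (b κ p : ℤ → ℝ) (Φ : ℤ → ℂ) (N : ℤ) (x κinf : ℝ)
    (hb : ∀ n : ℤ, b n ≤ b (n + 1)) (hbneg : ∀ n : ℤ, b n < 0)
    (hblim : Filter.Tendsto b Filter.atTop (nhds 0))
    (hx : 0 < x ∧ x < 2)
    (hosc : ∀ n > N, x - b n < 2)
    (hκ : ∀ n > N, 0 ≤ κ n ∧ κ n < Real.pi / 2 ∧ x - b n = 2 * Real.cos (κ n))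
    (hκinf : κinf = Real.arccos (x / 2))
    (hrec : ∀ n : ℤ, p (n + 1) = (x - b (n + 1)) * p n - p (n - 1))
    (hΦ : ∀ n > N, Φ n = (p n : ℂ) - Complex.exp (-(κ n : ℂ) * Complex.I) * (p (n - 1) : ℂ)) :
    ∀ n > N,
      ‖Φ (n + 1)‖ ≤ (1 + (κ (n + 1) - κ n) / Real.sin (κ n)) * ‖Φ n‖ ∧
      (1 - (κ (n + 1) - κ n) / Real.sin (κ n)) * ‖Φ n‖ ≤ ‖Φ (n + 1)‖ := by
  intro n hn
  have hn1 : n + 1 > N := by omega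
  obtain ⟨hκ0, hκhalf, hκcos⟩ := hκ n hn
  obtain ⟨hκ0', hκhalf', hκcos'⟩ := hκ (n + 1) hn1
  have hpi : (0:ℝ) < Real.pi := Real.pi_pos
  have hcoslt : Real.cos (κ n) < 1 := by
    have := hosc n hn; linarith [hκcos]
  have hκpos : 0 < κ n := by
    rcases lt_or_eq_of_le hκ0 with h | h
    · exact h
    · exfalso; rw [← h, Real.cos_zero] at hcoslt; linarith
  have hsinpos : 0 < Real.sin (κ n) := Real.sin_pos_of_pos_of_lt_pi hκpos (by linarith)
  have hcosle : Real.cos (κ (n+1)) ≤ Real.cos (κ n) := by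
    have := hb n; linarith [hκcos, hκcos']
  have hmono : κ n ≤ κ (n + 1) := by
    by_contra hlt
    push_neg at hlt
    have := Real.cos_lt_cos_of_nonneg_of_le_pi hκ0' (by linarith) hlt
    linarith
  set a := κ n with ha
  set c := κ (n + 1) with hc
  have hΦn := hΦ n hn
  have hΦn1 := hΦ (n + 1) hn1
  rw [show n + 1 - 1 = n by ring] at hΦn1
  rw [← ha] at hΦn
  rw [← hc] at hΦn1
  have hrecn := hrec n
  set Δ : ℂ := Complex.exp (-(a:ℂ) * Complex.I) - Complex.exp (-(c:ℂ) * Complex.I) with hΔ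
  have hinv : Complex.exp ((c:ℂ) * Complex.I) * Complex.exp (-(c:ℂ) * Complex.I) = 1 := by
    rw [← Complex.exp_add]; ring_nf; exact Complex.exp_zero
  have hkey : Φ (n + 1) = Complex.exp ((c:ℂ) * Complex.I) * (Φ n + Δ * (p (n-1) : ℂ)) := by
    rw [hΦn1, hΦn, hrecn, hκcos', hΔ]
    have hcosC : ((2 * Real.cos c : ℝ) : ℂ)
        = Complex.exp ((c:ℂ) * Complex.I) + Complex.exp (-(c:ℂ) * Complex.I) := by
      rw [Complex.ofReal_mul, Complex.ofReal_cos]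
      rw [show Complex.cos (c:ℂ) = (Complex.exp ((c:ℂ) * Complex.I) + Complex.exp (-(c:ℂ) * Complex.I)) / 2 from rfl]
      push_cast
      ring
    push_cast [hcosC]
    linear_combination (p (n-1) : ℂ) * hinv
  have habs1 : ‖Complex.exp ((c:ℂ) * Complex.I)‖ = 1 := Complex.norm_exp_ofReal_mul_I c
  have habsΦ : ‖Φ (n+1)‖ = ‖Φ n + Δ * (p (n-1) : ℂ)‖ := by
    rw [hkey, norm_mul, habs1, one_mul]
  have hdelta : ‖Δ * (p (n-1) : ℂ)‖ ≤ (c - a) / Real.sin a * ‖Φ n‖ := by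
    rw [norm_mul]
    have h1 : ‖Δ‖ ≤ c - a := aux_abs_exp_sub_exp a c hmono
    have h2 : Real.sin a * ‖(p (n-1) : ℂ)‖ ≤ ‖Φ n‖ := by
      have hexpim : (Complex.exp (-((a:ℂ) * Complex.I))).im = -Real.sin a := by
        rw [show -((a:ℂ) * Complex.I) = ((-a : ℝ) : ℂ) * Complex.I by push_cast; ring,
          Complex.exp_ofReal_mul_I_im, Real.sin_neg]
      have him : (Φ n).im = Real.sin a * p (n - 1) := by
        rw [hΦn]
        simp [Complex.sub_im, Complex.mul_im, hexpim]
      have him2 := Complex.abs_im_le_norm (Φ n)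
      rw [him] at him2
      rw [Complex.norm_real, Real.norm_eq_abs]
      calc Real.sin a * |p (n-1)| = |Real.sin a * p (n-1)| := by
            rw [abs_mul, _root_.abs_of_pos hsinpos]
        _ ≤ ‖Φ n‖ := him2
    have hnn : (0:ℝ) ≤ ‖(p (n-1) : ℂ)‖ := norm_nonneg _
    have hca : (0:ℝ) ≤ c - a := by linarith
    calc ‖Δ‖ * ‖(p (n-1):ℂ)‖
        ≤ (c - a) * ‖(p (n-1):ℂ)‖ := mul_le_mul_of_nonneg_right h1 hnn
      _ = (c - a) / Real.sin a * (Real.sin a * ‖(p (n-1):ℂ)‖) := by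
          field_simp
      _ ≤ (c - a) / Real.sin a * ‖Φ n‖ := by
          apply mul_le_mul_of_nonneg_left h2
          positivity
  constructor
  · rw [habsΦ]
    calc ‖Φ n + Δ * (p (n-1):ℂ)‖
        ≤ ‖Φ n‖ + ‖Δ * (p (n-1):ℂ)‖ := norm_add_le _ _
      _ ≤ ‖Φ n‖ + (c - a) / Real.sin a * ‖Φ n‖ := by linarith
      _ = (1 + (c - a) / Real.sin a) * ‖Φ n‖ := by ring
  · rw [habsΦ]
    have htri : ‖Φ n‖ - ‖Δ * (p (n-1):ℂ)‖
        ≤ ‖Φ n + Δ * (p (n-1):ℂ)‖ := by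
      have h3 := norm_add_le (Φ n + Δ * (p (n-1):ℂ)) (-(Δ * (p (n-1):ℂ)))
      rw [add_neg_cancel_right, norm_neg] at h3
      linarith
    calc (1 - (c - a) / Real.sin a) * ‖Φ n‖
        = ‖Φ n‖ - (c - a) / Real.sin a * ‖Φ n‖ := by ring
      _ ≤ ‖Φ n‖ - ‖Δ * (p (n-1):ℂ)‖ := by linarith
      _ ≤ _ := htri
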